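/- (Lower bound half of the interleaving theorem) Suppose P(ℝ^D \ ⋃_i Ω_i) ≤ m/2, where each Ω_i is a subset on which f ≥ t_i. Let g(y) = min_i t_i^{1/D} d(y, Ω_i). Then for every y ∈ ℝ^D, RDAD(y; f, m) ≥ g(y)/√2. -/
import Mathlib


open MeasureTheory Set

/-- The measure induced by the density `f`. -/
noncomputable def densMeasure {D : ℕ} (f : EuclideanSpace ℝ (Fin D) → ℝ) :
    Measure (EuclideanSpace ℝ (Fin D)) :=
  volume.withDensity fun ξ => ENNReal.ofReal (f ξ)

/-- `F_x(r) = P(f(X)^{1/D} d(X,x) ≤ r)`. -/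
noncomputable def Fcdf {D : ℕ} (f : EuclideanSpace ℝ (Fin D) → ℝ)
    (x : EuclideanSpace ℝ (Fin D)) (r : ℝ) : ℝ :=
  (densMeasure f {ξ | f ξ ^ ((1 : ℝ) / D) * dist ξ x ≤ r}).toReal

/-- Generalized inverse `F_x^{-1}(q) = inf {t : F_x(t) ≥ q}`. -/
noncomputable def Fquantile {D : ℕ} (f : EuclideanSpace ℝ (Fin D) → ℝ)
    (x : EuclideanSpace ℝ (Fin D)) (q : ℝ) : ℝ :=
  sInf {t : ℝ | q ≤ Fcdf f x t}

/-- `RDAD(x; f, m) = sqrt((1/m) ∫₀^m F_x^{-1}(q)² dq)`. -/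
noncomputable def RDAD {D : ℕ} (f : EuclideanSpace ℝ (Fin D) → ℝ)
    (x : EuclideanSpace ℝ (Fin D)) (m : ℝ) : ℝ :=
  Real.sqrt ((1 / m) * ∫ q in (0 : ℝ)..m, (Fquantile f x q) ^ 2)

/-- Lower bound half of the interleaving theorem: if `P(ℝ^D \ ⋃ Ω_i) ≤ m/2` where `f ≥ t_i`
on each `Ω_i`, then `RDAD(y; f, m) ≥ g(y)/√2` with `g(y) = min_i t_i^{1/D} d(y, Ω_i)`. -/
theorem RDAD_lower_bound {D k : ℕ} (hD : 0 < D) (hk : 0 < k)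
    (f : EuclideanSpace ℝ (Fin D) → ℝ) (hf : Measurable f) (hf0 : ∀ ξ, 0 ≤ f ξ)
    (hprob : IsProbabilityMeasure (densMeasure f))
    (Ω : Fin k → Set (EuclideanSpace ℝ (Fin D)))
    (hne : ∀ i, (Ω i).Nonempty)
    (hdisj : Pairwise fun i j => Disjoint (Ω i) (Ω j))
    (t : Fin k → ℝ) (ht : ∀ i, 0 < t i)
    (hft : ∀ i, ∀ x ∈ Ω i, t i ≤ f x)
    (m : ℝ) (hm : m ∈ Set.Ioo (0 : ℝ) 1)
    (hmass : densMeasure f (Set.univ \ ⋃ i, Ω i) ≤ ENNReal.ofReal (m / 2)) :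
    ∀ y : EuclideanSpace ℝ (Fin D),
      (⨅ i, t i ^ ((1 : ℝ) / D) * Metric.infDist y (Ω i)) / Real.sqrt 2 ≤ RDAD f y m := by
  intro y
  have hkne : Nonempty (Fin k) := ⟨⟨0, hk⟩⟩
  set g : ℝ := ⨅ i, t i ^ ((1 : ℝ) / D) * Metric.infDist y (Ω i) with hgdef
  have hg0 : 0 ≤ g :=
    Real.iInf_nonneg fun i =>
      mul_nonneg (Real.rpow_nonneg (ht i).le _) Metric.infDist_nonneg
  have hm0 : 0 < m := hm.1
  have hm1 : m < 1 := hm.2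
  -- Nonemptiness of the quantile sets
  have hSne : ∀ q : ℝ, q < 1 → {r : ℝ | q ≤ Fcdf f y r}.Nonempty := by
    intro q hq
    set A : ℕ → Set (EuclideanSpace ℝ (Fin D)) :=
      fun n => {ξ | f ξ ^ ((1 : ℝ) / D) * dist ξ y ≤ (n : ℝ)} with hA
    have hmono : Monotone A := by
      intro a b hab ξ hξ
      simp only [hA, mem_setOf_eq] at hξ ⊢
      exact le_trans hξ (Nat.cast_le.mpr hab)
    have hunion : ⋃ n, A n = univ := by
      ext ξ
      simp only [mem_iUnion, mem_univ, iff_true, hA, mem_setOf_eq]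
      exact ⟨⌈f ξ ^ ((1 : ℝ) / D) * dist ξ y⌉₊, Nat.le_ceil _⟩
    have htend := tendsto_measure_iUnion_atTop (μ := densMeasure f) hmono
    rw [hunion, measure_univ] at htend
    have hlt : ENNReal.ofReal q < 1 := by
      rcases le_or_gt q 0 with h | h
      · simpa [ENNReal.ofReal_eq_zero.mpr h] using ENNReal.zero_lt_one
      · exact ENNReal.ofReal_lt_one.mpr hq
    obtain ⟨n, hn⟩ := (htend.eventually_const_lt hlt).exists
    refine ⟨(n : ℝ), ?_⟩
    have hfin : densMeasure f (A n) ≠ ⊤ := measure_ne_top _ _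
    exact (ENNReal.ofReal_le_iff_le_toReal hfin).mp hn.le
  -- nonnegativity of members of the quantile sets for positive q
  have hSpos : ∀ q : ℝ, 0 < q → ∀ r ∈ {r : ℝ | q ≤ Fcdf f y r}, (0 : ℝ) ≤ r := by
    intro q hq r hr
    by_contra hneg
    push_neg at hneg
    have hempty : {ξ | f ξ ^ ((1 : ℝ) / D) * dist ξ y ≤ r} = ∅ := by
      ext ξ
      simp only [mem_setOf_eq, mem_empty_iff_false, iff_false, not_le]
      calc r < 0 := hneg
        _ ≤ f ξ ^ ((1 : ℝ) / D) * dist ξ y :=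
          mul_nonneg (Real.rpow_nonneg (hf0 ξ) _) dist_nonneg
    have : Fcdf f y r = 0 := by
      rw [Fcdf, hempty, measure_empty, ENNReal.toReal_zero]
    rw [mem_setOf_eq, this] at hr
    linarith
  -- key lower bound on quantiles
  have hkey : ∀ q : ℝ, m / 2 < q → q < 1 → g ≤ Fquantile f y q := by
    intro q hq1 hq2
    refine le_csInf (hSne q hq2) ?_
    intro r hr
    rw [mem_setOf_eq] at hr
    by_contra hlt
    push_neg at hlt
    have hsub : {ξ | f ξ ^ ((1 : ℝ) / D) * dist ξ y ≤ r} ⊆ univ \ ⋃ i, Ω i := by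
      intro ξ hξ
      rw [mem_setOf_eq] at hξ
      refine ⟨mem_univ _, fun hmem => ?_⟩
      obtain ⟨i, hi⟩ := mem_iUnion.mp hmem
      have h1 : t i ^ ((1 : ℝ) / D) * Metric.infDist y (Ω i) ≤
          f ξ ^ ((1 : ℝ) / D) * dist ξ y := by
        refine mul_le_mul (Real.rpow_le_rpow (ht i).le (hft i ξ hi) (by positivity)) ?_
          Metric.infDist_nonneg (Real.rpow_nonneg (hf0 ξ) _)
        rw [dist_comm]
        exact Metric.infDist_le_dist_of_mem hi
      have h2 : g ≤ t i ^ ((1 : ℝ) / D) * Metric.infDist y (Ω i) :=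
        ciInf_le (Set.Finite.bddBelow (Set.finite_range _)) i
      linarith
    have hle := (measure_mono (μ := densMeasure f) hsub).trans hmass
    have h3 : Fcdf f y r ≤ m / 2 := by
      rw [Fcdf]
      calc (densMeasure f _).toReal ≤ (ENNReal.ofReal (m / 2)).toReal :=
            ENNReal.toReal_mono ENNReal.ofReal_ne_top hle
        _ = m / 2 := ENNReal.toReal_ofReal (by linarith)
    linarith
  -- quantile is zero at zero
  have hq0 : Fquantile f y 0 = 0 := by
    have : {r : ℝ | (0 : ℝ) ≤ Fcdf f y r} = univ := by
      ext r
      simp only [mem_setOf_eq, mem_univ, iff_true]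
      exact ENNReal.toReal_nonneg
    rw [Fquantile, this]
    exact Real.sInf_of_not_bddBelow (not_bddBelow_univ)
  -- nonnegativity of quantiles on [0, 1)
  have hqnn : ∀ q : ℝ, 0 ≤ q → q < 1 → 0 ≤ Fquantile f y q := by
    intro q hq hq1
    rcases eq_or_lt_of_le hq with h | h
    · rw [← h, hq0]
    · exact le_csInf (hSne q hq1) (hSpos q h)
  -- monotonicity of the quantile function on [0, m]
  have hmonoQ : MonotoneOn (Fquantile f y) (Icc 0 m) := by
    intro a ha b hb hab
    rcases eq_or_lt_of_le ha.1 with h | h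
    · rw [← h, hq0]
      exact hqnn b hb.1 (lt_of_le_of_lt hb.2 hm1)
    · refine csInf_le_csInf ⟨0, fun r hr => hSpos a h r hr⟩
        (hSne b (lt_of_le_of_lt hb.2 hm1)) ?_
      intro r hr
      rw [mem_setOf_eq] at hr ⊢
      linarith
  -- monotonicity of the squared quantile function on [0, m]
  have hmonoQ2 : MonotoneOn (fun q => (Fquantile f y q) ^ 2) (Icc 0 m) := by
    intro a ha b hb hab
    have h1 := hmonoQ ha hb hab
    have h2 := hqnn a ha.1 (lt_of_le_of_lt ha.2 hm1)
    simpa using pow_le_pow_left₀ h2 h1 2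
  -- integrability
  have hint : IntervalIntegrable (fun q => (Fquantile f y q) ^ 2) volume 0 m := by
    apply MonotoneOn.intervalIntegrable
    rwa [uIcc_of_le hm0.le]
  have hsub1 : uIcc (0 : ℝ) (m / 2) ⊆ uIcc (0 : ℝ) m := by
    rw [uIcc_of_le (by linarith), uIcc_of_le hm0.le]
    exact Icc_subset_Icc le_rfl (by linarith)
  have hsub2 : uIcc (m / 2) m ⊆ uIcc (0 : ℝ) m := by
    rw [uIcc_of_le (by linarith), uIcc_of_le hm0.le]
    exact Icc_subset_Icc (by linarith) le_rfl
  have hint1 := hint.mono_set hsub1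
  have hint2 := hint.mono_set hsub2
  -- lower bound for the integral over [m/2, m]
  have hconst : IntervalIntegrable (fun _ : ℝ => g ^ 2) volume (m / 2) m :=
    intervalIntegrable_const
  have hae : (fun _ : ℝ => g ^ 2) ≤ᵐ[volume.restrict (Icc (m / 2) m)]
      fun q => (Fquantile f y q) ^ 2 := by
    have hne' : ∀ᵐ q : ℝ ∂(volume.restrict (Icc (m / 2) m)), q ≠ m / 2 := by
      refine ae_restrict_of_ae ?_
      rw [ae_iff]
      have : {q : ℝ | ¬q ≠ m / 2} = {m / 2} := by
        ext q; simp [not_not]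
      rw [this]
      exact measure_singleton _
    filter_upwards [ae_restrict_mem measurableSet_Icc, hne'] with q hqmem hqne
    have hq1 : m / 2 < q := lt_of_le_of_ne hqmem.1 (Ne.symm hqne)
    have hq2 : q < 1 := lt_of_le_of_lt hqmem.2 hm1
    have := hkey q hq1 hq2
    simpa using pow_le_pow_left₀ hg0 this 2
  have hlow : m / 2 * g ^ 2 ≤ ∫ q in (m / 2)..m, (Fquantile f y q) ^ 2 := by
    have h1 : (∫ _ in (m / 2)..m, g ^ 2) = (m - m / 2) * g ^ 2 := by
      simp [intervalIntegral.integral_const, smul_eq_mul]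
    have h2 := intervalIntegral.integral_mono_ae_restrict (by linarith : m / 2 ≤ m)
      hconst hint2 hae
    rw [h1] at h2
    calc m / 2 * g ^ 2 = (m - m / 2) * g ^ 2 := by ring
      _ ≤ _ := h2
  -- the integral over [0, m/2] is nonnegative
  have hnn1 : 0 ≤ ∫ q in (0 : ℝ)..(m / 2), (Fquantile f y q) ^ 2 :=
    intervalIntegral.integral_nonneg (by linarith) (fun u _ => sq_nonneg _)
  -- split the integral
  have hsplit : (∫ q in (0 : ℝ)..(m / 2), (Fquantile f y q) ^ 2) +
      (∫ q in (m / 2)..m, (Fquantile f y q) ^ 2) =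
      ∫ q in (0 : ℝ)..m, (Fquantile f y q) ^ 2 :=
    intervalIntegral.integral_add_adjacent_intervals hint1 hint2
  have htotal : m / 2 * g ^ 2 ≤ ∫ q in (0 : ℝ)..m, (Fquantile f y q) ^ 2 := by
    rw [← hsplit]; linarith
  -- conclude
  have hfinal : g ^ 2 / 2 ≤ (1 / m) * ∫ q in (0 : ℝ)..m, (Fquantile f y q) ^ 2 := by
    calc g ^ 2 / 2 = (1 / m) * (m / 2 * g ^ 2) := by field_simp
      _ ≤ _ := by
        apply mul_le_mul_of_nonneg_left htotal
        positivity
  calc g / Real.sqrt 2 = Real.sqrt (g ^ 2 / 2) := by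
        rw [Real.sqrt_div (sq_nonneg g), Real.sqrt_sq hg0]
    _ ≤ RDAD f y m := Real.sqrt_le_sqrt hfinal
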